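/- Let Q be a polynomial of degree m with positive leading coefficient q_m. Then there exists n₁ ∈ ℕ such that for all n ≥ n₁ there is a real number β_n > 0 with (1/(2π))∫₀^{β_n} Q'(x)√(x/(β_n−x)) dx = n; moreover β_n·n^{-1/m} → ((1/2) m q_m A_m)^{-1/m} as n → ∞, where A_m = ∏_{j=1}^m (2j−1)/(2j). -/

import Mathlib

open Filter intervalIntegral MeasureTheory

noncomputable def Jfun (k : ℕ) : ℝ := ∫ t in (0:ℝ)..1, t ^ k * Real.sqrt (t / (1 - t))

lemma Jfun_eq_rpow (k : ℕ) :
    Jfun k = ∫ t in (0:ℝ)..1, t ^ ((k:ℝ) + 1/2) * (1 - t) ^ (-(1/2) : ℝ) := by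
  refine intervalIntegral.integral_congr fun t ht => ?_
  rw [Set.uIcc_of_le (by norm_num : (0:ℝ) ≤ 1)] at ht
  obtain ⟨h0, h1⟩ := ht
  rcases eq_or_lt_of_le h0 with h | h
  · subst h
    rw [Real.zero_rpow (by positivity), zero_mul]
    simp
  rcases eq_or_lt_of_le h1 with h' | h'
  · subst h'
    norm_num [Real.zero_rpow]
  have h1t : (0:ℝ) < 1 - t := by linarith
  rw [Real.sqrt_eq_rpow, Real.div_rpow h0 h1t.le, Real.rpow_add h, Real.rpow_natCast,
    div_eq_mul_inv, ← Real.rpow_neg h1t.le, mul_assoc]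

lemma prod_Icc_cast (n : ℕ) : (∏ j ∈ Finset.Icc 1 n, (j:ℝ)) = (n.factorial : ℝ) := by
  induction n with
  | zero => simp
  | succ n ih =>
    rw [Finset.prod_Icc_succ_top (Nat.le_add_left 1 n), ih, Nat.factorial_succ]
    push_cast; ring

lemma gamma_half (n : ℕ) :
    Real.Gamma ((n:ℝ) + 1/2) = (∏ j ∈ Finset.Icc 1 n, ((2*(j:ℝ) - 1)/2)) * Real.sqrt Real.pi := by
  induction n with
  | zero => simpa using Real.Gamma_one_half_eq
  | succ n ih =>
    have h : ((n:ℝ)+1) + 1/2 = ((n:ℝ) + 1/2) + 1 := by ring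
    rw [Nat.cast_succ, h, Real.Gamma_add_one (by positivity), ih,
      Finset.prod_Icc_succ_top (Nat.le_add_left 1 n)]
    push_cast; ring

lemma Jfun_value (k : ℕ) :
    Jfun k = Real.pi * ∏ j ∈ Finset.Icc 1 (k+1), ((2*(j:ℝ) - 1)/(2*(j:ℝ))) := by
  have hbeta : Complex.Gamma (((k:ℝ) + 3/2 : ℝ) : ℂ) * Complex.Gamma (((1:ℝ)/2 : ℝ) : ℂ)
      = Complex.Gamma ((((k:ℝ) + 3/2 : ℝ) : ℂ) + (((1:ℝ)/2 : ℝ) : ℂ)) *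
        Complex.betaIntegral (((k:ℝ) + 3/2 : ℝ) : ℂ) (((1:ℝ)/2 : ℝ) : ℂ) := by
    apply Complex.Gamma_mul_Gamma_eq_betaIntegral <;> simp <;> positivity
  have hbi : Complex.betaIntegral (((k:ℝ) + 3/2 : ℝ) : ℂ) (((1:ℝ)/2 : ℝ) : ℂ)
      = ((Jfun k : ℝ) : ℂ) := by
    rw [Jfun_eq_rpow, Complex.betaIntegral, ← intervalIntegral.integral_ofReal]
    refine intervalIntegral.integral_congr fun t ht => ?_
    rw [Set.uIcc_of_le (by norm_num : (0:ℝ) ≤ 1)] at ht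
    obtain ⟨h0, h1⟩ := ht
    rw [show ((((k:ℝ) + 3/2 : ℝ)):ℂ) - 1 = (((k:ℝ) + 1/2 : ℝ) : ℂ) by push_cast; ring,
      show (((1:ℝ)/2 : ℝ):ℂ) - 1 = ((-(1/2) : ℝ) : ℂ) by push_cast; ring,
      show (1 - (t:ℂ)) = ((1 - t : ℝ) : ℂ) by push_cast; ring,
      ← Complex.ofReal_cpow h0, ← Complex.ofReal_cpow (by linarith), ← Complex.ofReal_mul]
  rw [Complex.Gamma_ofReal, Complex.Gamma_ofReal, hbi,
    show ((((k:ℝ) + 3/2 : ℝ)):ℂ) + (((1:ℝ)/2 : ℝ):ℂ) = ((k+1 : ℕ):ℂ) + 1 by push_cast; ring,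
    Complex.Gamma_nat_eq_factorial] at hbeta
  have hreal : Real.Gamma ((k:ℝ) + 3/2) * Real.Gamma (1/2) = (((k+1).factorial : ℕ) : ℝ) * Jfun k := by
    exact_mod_cast hbeta
  have hG : Real.Gamma ((k:ℝ) + 3/2)
      = (∏ j ∈ Finset.Icc 1 (k+1), ((2*(j:ℝ) - 1)/2)) * Real.sqrt Real.pi := by
    rw [show (k:ℝ) + 3/2 = ((k+1:ℕ):ℝ) + 1/2 by push_cast; ring, gamma_half]
  have hπ : Real.sqrt Real.pi * Real.sqrt Real.pi = Real.pi := Real.mul_self_sqrt Real.pi_pos.le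
  rw [Real.Gamma_one_half_eq, hG] at hreal
  have hfact : (0:ℝ) < (((k+1).factorial : ℕ) : ℝ) := by positivity
  have h1 : (∏ j ∈ Finset.Icc 1 (k+1), ((2*(j:ℝ) - 1)/2)) * Real.pi
      = (((k+1).factorial : ℕ) : ℝ) * Jfun k := by
    rw [← hπ]; linear_combination hreal
  have hprod : ∏ j ∈ Finset.Icc 1 (k+1), ((2*(j:ℝ) - 1)/(2*(j:ℝ)))
      = (∏ j ∈ Finset.Icc 1 (k+1), ((2*(j:ℝ) - 1)/2)) / (((k+1).factorial : ℕ) : ℝ) := by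
    rw [← prod_Icc_cast, ← Finset.prod_div_distrib]
    exact Finset.prod_congr rfl fun j hj => (div_div _ _ _).symm
  have h2 : Jfun k = (∏ j ∈ Finset.Icc 1 (k+1), ((2*(j:ℝ) - 1)/2)) * Real.pi
      / (((k+1).factorial : ℕ) : ℝ) := by
    rw [eq_div_iff hfact.ne', mul_comm (Jfun k), h1]
  rw [hprod, h2]; ring

lemma Jint (k : ℕ) :
    IntervalIntegrable (fun t : ℝ => t ^ k * Real.sqrt (t / (1 - t))) volume 0 1 := by
  have hg : IntervalIntegrable (fun t : ℝ => (1 - t) ^ (-(1/2) : ℝ)) volume 0 1 := by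
    have := (intervalIntegral.intervalIntegrable_rpow' (a := 0) (b := 1) (r := -(1/2))
      (by norm_num)).comp_sub_left 1
    simpa using this.symm
  refine hg.mono_fun ?_ ?_
  · apply Measurable.aestronglyMeasurable
    exact (measurable_id.pow_const k).mul
      ((measurable_id.div (measurable_const.sub measurable_id)).sqrt)
  · rw [Set.uIoc_of_le (by norm_num : (0:ℝ) ≤ 1)]
    refine Filter.eventually_of_mem (self_mem_ae_restrict measurableSet_Ioc) fun t ht => ?_
    obtain ⟨h0, h1⟩ := ht
    show ‖t ^ k * Real.sqrt (t / (1 - t))‖ ≤ ‖(1 - t) ^ (-(1/2) : ℝ)‖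
    have hn1 : (0:ℝ) ≤ 1 - t := by linarith
    rw [Real.norm_eq_abs, Real.norm_eq_abs, abs_of_nonneg (by positivity),
      abs_of_nonneg (Real.rpow_nonneg hn1 _)]
    have hb : Real.sqrt (t / (1 - t)) ≤ (1 - t) ^ (-(1/2) : ℝ) := by
      rw [Real.sqrt_div h0.le, Real.rpow_neg hn1, ← Real.sqrt_eq_rpow, div_eq_mul_inv]
      exact mul_le_of_le_one_left (inv_nonneg.2 (Real.sqrt_nonneg _)) (Real.sqrt_le_one.2 h1)
    calc t ^ k * Real.sqrt (t / (1 - t)) ≤ 1 * Real.sqrt (t / (1 - t)) := by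
          gcongr
          exact pow_le_one₀ h0.le h1
      _ ≤ (1 - t) ^ (-(1/2) : ℝ) := by rw [one_mul]; exact hb

lemma integral_eval (p : Polynomial ℝ) {m : ℕ} (hd : p.natDegree < m) {β : ℝ} (hβ : 0 < β) :
    ∫ x in (0:ℝ)..β, p.eval x * Real.sqrt (x / (β - x))
      = ∑ k ∈ Finset.range m, p.coeff k * Jfun k * β ^ (k+1) := by
  have hs := intervalIntegral.smul_integral_comp_mul_left
    (fun x => p.eval x * Real.sqrt (x / (β - x))) β (a := 0) (b := 1)
  simp only [mul_zero, mul_one] at hs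
  rw [← hs]
  have hint : ∀ t : ℝ, p.eval (β * t) * Real.sqrt (β * t / (β - β * t))
      = ∑ k ∈ Finset.range m, (p.coeff k * β ^ k) * (t ^ k * Real.sqrt (t / (1 - t))) := by
    intro t
    rw [show β - β * t = β * (1 - t) by ring, mul_div_mul_left _ _ hβ.ne',
      Polynomial.eval_eq_sum_range' hd, Finset.sum_mul]
    exact Finset.sum_congr rfl fun k _ => by rw [mul_pow]; ring
  simp only [hint]
  rw [intervalIntegral.integral_finset_sum fun k _ => (Jint k).const_mul _]
  simp only [intervalIntegral.integral_const_mul]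
  rw [smul_eq_mul, Finset.mul_sum]
  exact Finset.sum_congr rfl fun k _ => by rw [Jfun]; ring


/-- existence of MRS numbers for a polynomial `Q` of degree `m` with
positive leading coefficient, together with the leading order asymptotics
`β_n n^{-1/m} → ((1/2) m q_m A_m)^{-1/m}`. -/
theorem mrs_number_exists (m : ℕ) (hm : 1 ≤ m) (Q : Polynomial ℝ)
    (hdeg : Q.natDegree = m) (hlead : 0 < Q.leadingCoeff)
    (A : ℝ) (hA : A = ∏ j ∈ Finset.Icc 1 m, (2 * (j : ℝ) - 1) / (2 * (j : ℝ))) :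
    ∃ (n₁ : ℕ) (β : ℕ → ℝ),
      (∀ n, n₁ ≤ n → 0 < β n ∧
        (1 / (2 * Real.pi)) *
          ∫ x in (0:ℝ)..(β n),
            (Polynomial.derivative Q).eval x * Real.sqrt (x / (β n - x)) = n) ∧
      Tendsto (fun n : ℕ => β n * (n : ℝ) ^ (-(1:ℝ) / m)) atTop
        (nhds (((1/2) * m * Q.leadingCoeff * A) ^ (-(1:ℝ) / m))) := by
  classical
  have hπ : (0:ℝ) < Real.pi := Real.pi_pos
  have hm' : (0:ℝ) < m := by exact_mod_cast hm
  set Q' := Polynomial.derivative Q with hQ'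
  have hd : Q'.natDegree < m := hdeg ▸ Polynomial.natDegree_derivative_lt (by omega)
  set c₀ : ℝ := (1/2) * m * Q.leadingCoeff * A with hc₀
  have hApos : 0 < A := by
    rw [hA]
    refine Finset.prod_pos fun j hj => ?_
    have h1j : 1 ≤ j := (Finset.mem_Icc.1 hj).1
    have : (1:ℝ) ≤ j := by exact_mod_cast h1j
    apply div_pos <;> linarith
  have hc0pos : 0 < c₀ := by
    rw [hc₀]
    have := mul_pos (mul_pos (mul_pos (by norm_num : (0:ℝ) < 1/2) hm') hlead) hApos
    linarith
  set P : Polynomial ℝ :=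
    ∑ k ∈ Finset.range m, Polynomial.C (Q'.coeff k * Jfun k / (2 * Real.pi)) *
      Polynomial.X ^ (k+1) with hP
  have hPeval : ∀ b : ℝ, P.eval b
      = ∑ k ∈ Finset.range m, Q'.coeff k * Jfun k / (2 * Real.pi) * b ^ (k+1) := by
    intro b; simp [hP, Polynomial.eval_finset_sum]
  have hPF : ∀ b : ℝ, 0 < b → P.eval b
      = (1 / (2 * Real.pi)) * ∫ x in (0:ℝ)..b, Q'.eval x * Real.sqrt (x / (b - x)) := by
    intro b hb
    rw [integral_eval Q' hd hb, hPeval, Finset.mul_sum]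
    exact Finset.sum_congr rfl fun k _ => by field_simp
  have hcoeffm : Q'.coeff (m-1) = Q.leadingCoeff * m := by
    rw [hQ', Polynomial.coeff_derivative, show m - 1 + 1 = m by omega, ← hdeg,
      Polynomial.coeff_natDegree]
    congr 1
    rw [hdeg]
    push_cast [Nat.cast_sub hm]
    try ring
  have hc0coeff : Q'.coeff (m-1) * Jfun (m-1) / (2 * Real.pi) = c₀ := by
    rw [hcoeffm, Jfun_value, show m - 1 + 1 = m by omega, ← hA, hc₀]
    field_simp
  have hPcoeff : P.coeff m = c₀ := by
    rw [hP, Polynomial.finset_sum_coeff]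
    simp only [Polynomial.coeff_C_mul, Polynomial.coeff_X_pow]
    rw [Finset.sum_eq_single (m-1)]
    · rw [if_pos (by omega), mul_one, hc0coeff]
    · intro k hk hkne
      rw [if_neg (by omega), mul_zero]
    · intro h
      exact absurd (Finset.mem_range.2 (by omega)) h
  have hPne : P ≠ 0 := fun h => by
    rw [h, Polynomial.coeff_zero] at hPcoeff; exact hc0pos.ne hPcoeff
  have hPdeg : P.natDegree = m := by
    refine le_antisymm ?_ (Polynomial.le_natDegree_of_ne_zero (hPcoeff ▸ hc0pos.ne'))
    rw [hP]
    refine Polynomial.natDegree_sum_le_of_forall_le _ _ fun k hk => ?_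
    exact le_trans (Polynomial.natDegree_C_mul_le _ _)
      (le_trans (Polynomial.natDegree_X_pow_le _) (by
        have := Finset.mem_range.1 hk; omega))
  have hPlead : P.leadingCoeff = c₀ := by
    rw [Polynomial.leadingCoeff, hPdeg, hPcoeff]
  have hdegpos : 0 < P.degree := by
    rw [Polynomial.degree_eq_natDegree hPne, hPdeg]
    exact_mod_cast (by omega : 0 < m)
  have htop : Tendsto (fun x => P.eval x) atTop atTop :=
    Polynomial.tendsto_atTop_of_leadingCoeff_nonneg P hdegpos (hPlead ▸ hc0pos.le)
  have hP0 : P.eval 0 = 0 := by simp [hPeval]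
  have hex : ∀ n : ℕ, 1 ≤ n → ∃ x : ℝ, 0 < x ∧ P.eval x = n := by
    intro n hn
    obtain ⟨M, hM⟩ := eventually_atTop.1 (htop.eventually_ge_atTop (n:ℝ))
    have hb : (n:ℝ) ≤ P.eval (max M 0) := hM _ (le_max_left _ _)
    have hIVT := intermediate_value_Icc (le_max_right M 0)
      (Polynomial.continuous P).continuousOn
    have hmem : (n:ℝ) ∈ Set.Icc (P.eval 0) (P.eval (max M 0)) := by
      rw [hP0]; exact ⟨by positivity, by simpa using hb⟩
    obtain ⟨x, hx, hx2⟩ := hIVT hmem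
    have hx2' : P.eval x = n := hx2
    refine ⟨x, ?_, hx2'⟩
    rcases eq_or_lt_of_le hx.1 with h | h
    · exfalso
      rw [← h, hP0] at hx2'
      have : n = 0 := by exact_mod_cast hx2'.symm
      omega
    · exact h
  set β : ℕ → ℝ := fun n => if h : ∃ x : ℝ, 0 < x ∧ P.eval x = n then h.choose else 1 with hβdef
  have hβ : ∀ n : ℕ, 1 ≤ n → 0 < β n ∧ P.eval (β n) = n := by
    intro n hn
    have h := hex n hn
    rw [hβdef]
    simp only [dif_pos h]
    exact ⟨h.choose_spec.1, h.choose_spec.2⟩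
  have hβtop : Tendsto β atTop atTop := by
    rw [tendsto_atTop]
    intro R
    obtain ⟨x0, _, hx0⟩ := isCompact_Icc.exists_isMaxOn
      (Set.nonempty_Icc.2 (le_max_right R 0)) (Polynomial.continuous P).continuousOn
    set b := P.eval x0
    filter_upwards [eventually_ge_atTop (max 1 (⌊b⌋₊ + 1))] with n hn
    have hn1 : 1 ≤ n := le_trans (le_max_left _ _) hn
    have hbn : b < (n:ℝ) := lt_of_lt_of_le (Nat.lt_floor_add_one b)
      (by exact_mod_cast le_trans (le_max_right _ _) hn)
    by_contra hcon
    push_neg at hcon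
    have hx : β n ∈ Set.Icc (0:ℝ) (max R 0) :=
      ⟨(hβ n hn1).1.le, le_trans hcon.le (le_max_left _ _)⟩
    have h6 : P.eval (β n) ≤ P.eval x0 := hx0 hx
    rw [(hβ n hn1).2] at h6
    linarith [h6]
  refine ⟨1, β, fun n hn => ⟨(hβ n hn).1, ?_⟩, ?_⟩
  · rw [← hPF _ (hβ n hn).1]
    exact (hβ n hn).2
  · -- asymptotics
    have heq := P.isEquivalent_atTop_lead
    rw [hPlead, hPdeg] at heq
    rw [Asymptotics.isEquivalent_iff_tendsto_one (by
      filter_upwards [eventually_gt_atTop (0:ℝ)] with x hx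
      positivity)] at heq
    have h2 : Tendsto (fun n => P.eval (β n) / (c₀ * (β n) ^ m)) atTop (nhds 1) := by
      have := heq.comp hβtop
      exact this
    have h2' : Tendsto (fun n : ℕ => (n:ℝ) / (c₀ * (β n) ^ m)) atTop (nhds 1) := by
      refine Filter.Tendsto.congr' ?_ h2
      filter_upwards [eventually_ge_atTop 1] with n hn
      rw [(hβ n hn).2]
    have h3 : Tendsto (fun n : ℕ => (β n) ^ m * (n:ℝ)⁻¹) atTop (nhds c₀⁻¹) := by
      have h4 := (h2'.inv₀ one_ne_zero).const_mul c₀⁻¹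
      norm_num at h4
      refine Filter.Tendsto.congr' ?_ h4
      filter_upwards [eventually_ge_atTop 1] with n hn
      have hβn : (0:ℝ) < β n := (hβ n hn).1
      have hn0 : (0:ℝ) < n := by exact_mod_cast hn
      field_simp
    have h5 : Tendsto (fun n : ℕ => ((β n) ^ m * (n:ℝ)⁻¹) ^ ((1:ℝ)/m)) atTop
        (nhds (c₀⁻¹ ^ ((1:ℝ)/m))) := h3.rpow_const (Or.inr (by positivity))
    have hconst : c₀⁻¹ ^ ((1:ℝ)/m) = c₀ ^ (-(1:ℝ)/m) := by
      rw [neg_div, Real.rpow_neg hc0pos.le, ← Real.inv_rpow hc0pos.le]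
    rw [← hconst]
    refine Filter.Tendsto.congr' ?_ h5
    filter_upwards [eventually_ge_atTop 1] with n hn
    have hβn : (0:ℝ) < β n := (hβ n hn).1
    have hn0 : (0:ℝ) ≤ n := Nat.cast_nonneg n
    rw [Real.mul_rpow (by positivity) (by positivity),
      ← Real.rpow_natCast (β n) m, ← Real.rpow_mul hβn.le,
      mul_one_div_cancel (show (m:ℝ) ≠ 0 by positivity), Real.rpow_one,
      Real.inv_rpow hn0, neg_div, Real.rpow_neg hn0]
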